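/- Let S be a minimal blocking set in a symmetric 2-(v, k, λ) design (every block meets S, and through every point of S there is a block meeting S in exactly one point). Then |S| ≤ v·(1 + √(k−λ))/(k + √(k−λ)). -/

import Mathlib

open Finset

set_option maxHeartbeats 1000000 in
/-- Upper bound on minimal blocking sets in symmetric 2-(v,k,λ) designs. -/
theorem minimal_blocking_set_symmetric_design (X B : Type*) [Fintype X] [Fintype B]
    (blk : B → Finset X) (v k lam : ℕ)
    (hv : Fintype.card X = v) (hb : Fintype.card B = v)
    (hv0 : 0 < v) (hk : 2 ≤ k) (hlam0 : 0 < lam) (hlamk : lam < k)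
    (hksize : ∀ β : B, (blk β).card = k)
    (hlam : ∀ x y : X, x ≠ y → Nat.card {β : B // x ∈ blk β ∧ y ∈ blk β} = lam)
    (S : Finset X)
    (hblock : ∀ β : B, ∃ p ∈ S, p ∈ blk β)
    (hmin : ∀ p ∈ S, ∃ β : B, p ∈ blk β ∧ Nat.card {q : X // q ∈ S ∧ q ∈ blk β} = 1) :
    (S.card : ℝ) ≤ (v : ℝ) * (1 + Real.sqrt ((k : ℝ) - lam)) / ((k : ℝ) + Real.sqrt ((k : ℝ) - lam)) := by
  classical
  set n : B → ℕ := fun β => (S ∩ blk β).card with hn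
  set r : X → ℕ := fun x => (univ.filter fun β : B => x ∈ blk β).card with hr
  have hlam' : ∀ x y : X, x ≠ y →
      (univ.filter fun β : B => x ∈ blk β ∧ y ∈ blk β).card = lam := by
    intro x y hxy
    have := hlam x y hxy
    rwa [Nat.card_eq_fintype_card, Fintype.card_subtype] at this
  -- r x * (k-1) = lam * (v-1)
  have count1 : ∀ x : X, r x * (k - 1) = lam * (v - 1) := by
    intro x
    have h1 : ∑ β ∈ univ.filter (fun β : B => x ∈ blk β), ((blk β).card - 1)
        = r x * (k - 1) := by
      rw [Finset.sum_congr rfl (fun β _ => by rw [hksize β]), Finset.sum_const, smul_eq_mul]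
    have h2 : ∑ β ∈ univ.filter (fun β : B => x ∈ blk β), ((blk β).card - 1)
        = lam * (v - 1) := by
      have hterm : ∀ β ∈ univ.filter (fun β : B => x ∈ blk β),
          (blk β).card - 1 = ∑ y ∈ univ.erase x, (if y ∈ blk β then 1 else 0) := by
        intro β hβ
        simp only [mem_filter, mem_univ, true_and] at hβ
        rw [← Finset.card_filter]
        have he : (univ.erase x).filter (fun y => y ∈ blk β) = (blk β).erase x := by
          ext y; simp [Finset.mem_erase, and_comm, and_left_comm]
        rw [he, Finset.card_erase_of_mem hβ]
      rw [Finset.sum_congr rfl hterm, Finset.sum_comm]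
      have hin : ∀ y ∈ univ.erase x,
          (∑ β ∈ univ.filter (fun β : B => x ∈ blk β), (if y ∈ blk β then 1 else 0))
            = lam := by
        intro y hy
        rw [← Finset.card_filter, Finset.filter_filter]
        exact hlam' x y (fun h => (Finset.mem_erase.mp hy).1 h.symm)
      rw [Finset.sum_congr rfl hin, Finset.sum_const, smul_eq_mul,
        Finset.card_erase_of_mem (mem_univ x), Finset.card_univ, hv, mul_comm]
    omega
  -- sum of r = v * k
  have count2 : ∑ x : X, r x = v * k := by
    have hrx : ∀ x : X, r x = ∑ β : B, (if x ∈ blk β then 1 else 0) := by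
      intro x
      show (univ.filter fun β : B => x ∈ blk β).card = _
      rw [Finset.card_filter]
    rw [Finset.sum_congr rfl (fun x _ => hrx x), Finset.sum_comm]
    have hin : ∀ β : B, (∑ x : X, if x ∈ blk β then 1 else 0) = k := by
      intro β
      rw [← Finset.card_filter]
      have huf : univ.filter (fun x => x ∈ blk β) = blk β := by ext y; simp
      rw [huf, hksize]
    rw [Finset.sum_congr rfl (fun β _ => hin β), Finset.sum_const, smul_eq_mul,
      Finset.card_univ, hb]
  -- fundamental relation
  have hvk : lam * (v - 1) = k * (k - 1) := by
    have h1 : ∑ x : X, (r x * (k - 1)) = v * (lam * (v - 1)) := by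
      rw [Finset.sum_congr rfl (fun x _ => count1 x), Finset.sum_const, smul_eq_mul,
        Finset.card_univ, hv]
    rw [← Finset.sum_mul, count2] at h1
    have h2 : v * (k * (k - 1)) = v * (lam * (v - 1)) := by rw [← mul_assoc]; exact h1
    exact (Nat.eq_of_mul_eq_mul_left hv0 h2).symm
  have hrk : ∀ x : X, r x = k := by
    intro x
    have h := count1 x
    rw [hvk] at h
    exact Nat.eq_of_mul_eq_mul_right (by omega : 0 < k - 1) h
  -- first moment
  have hnsum : ∀ β : B, n β = ∑ p ∈ S, (if p ∈ blk β then 1 else 0) := by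
    intro β
    show (S ∩ blk β).card = _
    rw [← Finset.filter_mem_eq_inter, Finset.card_filter]
  have E1 : ∑ β : B, n β = S.card * k := by
    rw [Finset.sum_congr rfl (fun β _ => hnsum β), Finset.sum_comm]
    have hin : ∀ p ∈ S, (∑ β : B, if p ∈ blk β then 1 else 0) = k := by
      intro p _
      rw [← Finset.card_filter]; exact hrk p
    rw [Finset.sum_congr rfl hin, Finset.sum_const, smul_eq_mul]
  -- second moment
  have E2 : ∑ β : B, n β * n β = S.card * (lam * S.card + (k - lam)) := by
    have hsq : ∀ β : B, n β * n β
        = ∑ p ∈ S, ∑ q ∈ S, (if p ∈ blk β ∧ q ∈ blk β then 1 else 0) := by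
      intro β
      rw [hnsum β, Finset.sum_mul_sum]
      refine Finset.sum_congr rfl fun p _ => Finset.sum_congr rfl fun q _ => ?_
      by_cases h1 : p ∈ blk β <;> by_cases h2 : q ∈ blk β <;> simp [h1, h2]
    rw [Finset.sum_congr rfl (fun β _ => hsq β), Finset.sum_comm]
    have h1 : ∀ p ∈ S,
        (∑ β : B, ∑ q ∈ S, (if p ∈ blk β ∧ q ∈ blk β then 1 else 0))
          = lam * S.card + (k - lam) := by
      intro p hp
      rw [Finset.sum_comm]
      have h2 : ∀ q ∈ S,
          (∑ β : B, if p ∈ blk β ∧ q ∈ blk β then 1 else 0)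
            = if p = q then k else lam := by
        intro q _
        rw [← Finset.card_filter]
        by_cases hpq : p = q
        · subst hpq
          simp only [and_self, if_true]
          exact hrk p
        · rw [if_neg hpq]; exact hlam' p q hpq
      rw [Finset.sum_congr rfl h2]
      have h3 : ∀ q ∈ S, (if p = q then k else lam)
          = lam + (if p = q then k - lam else 0) := by
        intro q _
        by_cases hpq : p = q
        · simp only [hpq, if_true]; omega
        · simp [hpq]
      rw [Finset.sum_congr rfl h3, Finset.sum_add_distrib, Finset.sum_const, smul_eq_mul,
        Finset.sum_ite_eq S p (fun _ => k - lam), if_pos hp, mul_comm]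
    rw [Finset.sum_congr rfl h1, Finset.sum_const, smul_eq_mul]
  -- every block is blocked
  have hn1 : ∀ β : B, 1 ≤ n β := by
    intro β
    obtain ⟨p, hp, hpb⟩ := hblock β
    exact Finset.card_pos.mpr ⟨p, Finset.mem_inter.mpr ⟨hp, hpb⟩⟩
  -- tangents
  have hmin' : ∀ p ∈ S, ∃ β : B, p ∈ blk β ∧ n β = 1 := by
    intro p hp
    obtain ⟨β, hβ1, hβ2⟩ := hmin p hp
    refine ⟨β, hβ1, ?_⟩
    rw [Nat.card_eq_fintype_card, Fintype.card_subtype] at hβ2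
    show (S ∩ blk β).card = 1
    have huf : univ.filter (fun q => q ∈ S ∧ q ∈ blk β) = S ∩ blk β := by
      ext q; simp [Finset.mem_inter]
    rwa [huf] at hβ2
  set T : Finset B := univ.filter (fun β => n β = 1) with hT
  have hBne : Nonempty B := Fintype.card_pos_iff.mp (by omega)
  have hst : S.card ≤ T.card := by
    set f : X → B := fun p =>
      if h : ∃ β : B, p ∈ blk β ∧ n β = 1 then h.choose else Classical.arbitrary B with hf
    apply Finset.card_le_card_of_injOn f
    · intro p hp
      have hex : ∃ β : B, p ∈ blk β ∧ n β = 1 := hmin' p hp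
      rw [Finset.mem_coe, hT, Finset.mem_filter, hf]
      simp only [dif_pos hex]
      exact ⟨mem_univ _, hex.choose_spec.2⟩
    · intro p hp q hq hfpq
      have hep : ∃ β : B, p ∈ blk β ∧ n β = 1 := hmin' p hp
      have heq : ∃ β : B, q ∈ blk β ∧ n β = 1 := hmin' q hq
      rw [hf] at hfpq
      simp only [dif_pos hep, dif_pos heq] at hfpq
      have h1 := hep.choose_spec
      have h2 := heq.choose_spec
      rw [hfpq] at h1
      obtain ⟨a, ha⟩ := Finset.card_eq_one.mp h2.2
      have hpm : p ∈ S ∩ blk heq.choose := Finset.mem_inter.mpr ⟨hp, h1.1⟩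
      have hqm : q ∈ S ∩ blk heq.choose := Finset.mem_inter.mpr ⟨hq, h2.1⟩
      rw [ha, Finset.mem_singleton] at hpm hqm
      rw [hpm, hqm]
  have htv : T.card ≤ v := by rw [← hb, ← Finset.card_univ]; exact Finset.card_filter_le _ _
  have hsv : S.card ≤ v := by rw [← hv, ← Finset.card_univ]; exact Finset.card_le_univ S
  -- move to the reals
  set sr : ℝ := (S.card : ℝ) with hsr
  set tr : ℝ := (T.card : ℝ) with htr
  set vr : ℝ := (v : ℝ) with hvr
  set kr : ℝ := (k : ℝ) with hkr
  set lr : ℝ := (lam : ℝ) with hlr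
  have hvr0 : (0:ℝ) < vr := by rw [hvr]; exact_mod_cast hv0
  have hkr2 : (2:ℝ) ≤ kr := by rw [hkr]; exact_mod_cast hk
  have hml : lr < kr := by rw [hkr, hlr]; exact_mod_cast hlamk
  have hsrv : sr ≤ vr := by rw [hsr, hvr]; exact_mod_cast hsv
  have htrv : tr ≤ vr := by rw [htr, hvr]; exact_mod_cast htv
  have hstr : sr ≤ tr := by rw [hsr, htr]; exact_mod_cast hst
  have hsr0 : (0:ℝ) ≤ sr := by rw [hsr]; positivity
  have C1 : ∑ β : B, (n β : ℝ) = kr * sr := by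
    have h := congrArg (fun m : ℕ => (m : ℝ)) E1
    push_cast at h
    rw [hkr, hsr, h]; ring
  have C2 : ∑ β : B, (n β : ℝ)^2 = lr * sr^2 + (kr - lr) * sr := by
    have h := congrArg (fun m : ℕ => (m : ℝ)) E2
    push_cast [Nat.cast_sub hlamk.le] at h
    have h2 : ∑ β : B, (n β : ℝ)^2 = ∑ β : B, ((n β : ℝ) * (n β : ℝ)) := by
      refine Finset.sum_congr rfl fun β _ => ?_; ring
    rw [h2, h, hkr, hsr, hlr]; ring
  have Ck : kr * (kr - 1) = lr * (vr - 1) := by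
    have h := congrArg (fun m : ℕ => (m : ℝ)) hvk
    push_cast [Nat.cast_sub (by omega : 1 ≤ v), Nat.cast_sub (by omega : 1 ≤ k)] at h
    rw [hkr, hlr, hvr]; linarith [h]
  set c : ℝ := kr * sr / vr with hc
  have hvc : vr * c = kr * sr := by rw [hc]; field_simp
  -- total sum of squared deviations
  have expand : ∑ β : B, ((n β : ℝ) - c)^2
      = (∑ β : B, (n β : ℝ)^2) - (2*c) * (∑ β : B, (n β : ℝ)) + vr * c^2 := by
    have h : ∀ β : B, ((n β : ℝ) - c)^2 = (n β : ℝ)^2 - (2*c)*(n β : ℝ) + c^2 :=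
      fun β => by ring
    rw [Finset.sum_congr rfl (fun β _ => h β), Finset.sum_add_distrib,
      Finset.sum_sub_distrib, ← Finset.mul_sum, Finset.sum_const, Finset.card_univ, hb,
      nsmul_eq_mul, ← hvr]
  have Sf2 : vr * (∑ β : B, ((n β : ℝ) - c)^2) = (kr - lr) * sr * (vr - sr) := by
    rw [expand, C1, C2]
    linear_combination (vr*c - kr*sr) * hvc - sr^2 * Ck
  -- split over tangents
  have hsplit : ∑ β : B, ((n β : ℝ) - c)^2
      = (∑ β ∈ T, ((n β : ℝ) - c)^2)
        + (∑ β ∈ univ.filter (fun β => ¬ n β = 1), ((n β : ℝ) - c)^2) := by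
    rw [hT]
    exact (Finset.sum_filter_add_sum_filter_not univ (fun β => n β = 1) _).symm
  have hTval : ∀ β ∈ T, ((n β : ℝ) - c) = 1 - c := by
    intro β hβ
    rw [hT, Finset.mem_filter] at hβ
    rw [hβ.2]; norm_num
  have hTsq : ∑ β ∈ T, ((n β : ℝ) - c)^2 = tr * (1 - c)^2 := by
    rw [Finset.sum_congr rfl (fun β hβ => by rw [hTval β hβ]), Finset.sum_const,
      nsmul_eq_mul, htr]
  have hTsum : ∑ β ∈ T, ((n β : ℝ) - c) = tr * (1 - c) := by
    rw [Finset.sum_congr rfl hTval, Finset.sum_const, nsmul_eq_mul, htr]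
  have hAllsum : ∑ β : B, ((n β : ℝ) - c) = 0 := by
    rw [Finset.sum_sub_distrib, C1, Finset.sum_const, Finset.card_univ, hb, nsmul_eq_mul,
      ← hvr, hvc]
    ring
  have hCsum : ∑ β ∈ univ.filter (fun β => ¬ n β = 1), ((n β : ℝ) - c)
      = -(tr * (1 - c)) := by
    have hh := Finset.sum_filter_add_sum_filter_not univ (fun β => n β = 1)
      (fun β => ((n β : ℝ) - c))
    rw [hAllsum] at hh
    rw [hT] at hTsum
    linarith [hh, hTsum]
  have hCcard : ((univ.filter (fun β : B => ¬ n β = 1)).card : ℝ) = vr - tr := by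
    have hh := Finset.card_filter_add_card_filter_not (s := (univ : Finset B))
      (p := fun β => n β = 1)
    rw [Finset.card_univ, hb] at hh
    have h2 : T.card + (univ.filter (fun β : B => ¬ n β = 1)).card = v := by
      rw [hT]; exact hh
    have h3 := congrArg (fun m : ℕ => (m : ℝ)) h2
    push_cast at h3
    rw [htr, hvr]
    linarith [h3]
  set B2 : ℝ := ∑ β ∈ univ.filter (fun β : B => ¬ n β = 1), ((n β : ℝ) - c)^2 with hB2def
  have hCS : (tr * (1 - c))^2 ≤ (vr - tr) * B2 := by
    have h := sq_sum_le_card_mul_sum_sq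
      (s := univ.filter (fun β : B => ¬ n β = 1)) (f := fun β => ((n β : ℝ) - c))
    rw [hCsum, hCcard] at h
    calc (tr * (1-c))^2 = (-(tr * (1-c)))^2 := by ring
    _ ≤ _ := h
  have hB2nn : 0 ≤ B2 := by rw [hB2def]; positivity
  have hsq : (kr * sr - vr)^2 = vr^2 * (1 - c)^2 := by
    linear_combination (2*vr - kr*sr - vr*c) * hvc
  have KEY : tr * (kr * sr - vr)^2 ≤ (kr - lr) * sr * (vr - sr) * (vr - tr) := by
    have hB2eq : vr * (B2 + tr * (1 - c)^2) = (kr - lr) * sr * (vr - sr) := by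
      rw [← Sf2, hsplit, hTsq, hB2def]; ring
    have hB2eq' : vr * (B2 + tr * (1 - c)^2) * (vr - tr)
        = (kr - lr) * sr * (vr - sr) * (vr - tr) := by rw [hB2eq]
    have hsq' : tr * (kr * sr - vr)^2 = tr * (vr^2 * (1 - c)^2) := by rw [hsq]
    have h1 : vr * (tr * (1 - c))^2 ≤ vr * ((vr - tr) * B2) :=
      mul_le_mul_of_nonneg_left hCS hvr0.le
    have h1' : vr * (tr^2 * (1 - c)^2) ≤ vr * ((vr - tr) * B2) := by
      calc vr * (tr^2 * (1 - c)^2) = vr * (tr * (1 - c))^2 := by ring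
        _ ≤ _ := h1
    calc tr * (kr * sr - vr)^2 = tr * (vr^2 * (1 - c)^2) := hsq'
      _ = vr * (tr^2 * (1 - c)^2) + vr * (tr * (1 - c)^2) * (vr - tr) := by ring
      _ ≤ vr * ((vr - tr) * B2) + vr * (tr * (1 - c)^2) * (vr - tr) :=
          add_le_add_left h1' _
      _ = vr * (B2 + tr * (1 - c)^2) * (vr - tr) := by ring
      _ = (kr - lr) * sr * (vr - sr) * (vr - tr) := hB2eq'
  -- conclude
  have hsqnn := Real.sqrt_nonneg (kr - lr)
  by_cases hs0 : S.card = 0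
  · have hz : sr = 0 := by rw [hsr, hs0]; norm_num
    rw [hz]
    apply div_nonneg
    · apply mul_nonneg hvr0.le; linarith
    · linarith
  · have hsr0' : (0:ℝ) < sr := by
      rw [hsr]; exact_mod_cast Nat.pos_of_ne_zero hs0
    have hmr0 : (0:ℝ) ≤ kr - lr := by linarith
    have step1 : sr * (kr * sr - vr)^2 ≤ (kr - lr) * sr * (vr - sr)^2 := by
      have ha : sr * (kr * sr - vr)^2 ≤ tr * (kr * sr - vr)^2 :=
        mul_le_mul_of_nonneg_right hstr (sq_nonneg _)
      have hb' : (kr - lr) * sr * (vr - sr) * (vr - tr)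
          ≤ (kr - lr) * sr * (vr - sr) * (vr - sr) := by
        apply mul_le_mul_of_nonneg_left (by linarith) ?_
        exact mul_nonneg (mul_nonneg hmr0 hsr0) (by linarith)
      calc sr * (kr * sr - vr)^2 ≤ tr * (kr * sr - vr)^2 := ha
        _ ≤ (kr - lr) * sr * (vr - sr) * (vr - tr) := KEY
        _ ≤ (kr - lr) * sr * (vr - sr) * (vr - sr) := hb'
        _ = (kr - lr) * sr * (vr - sr)^2 := by ring
    have step2 : (kr * sr - vr)^2 ≤ (kr - lr) * (vr - sr)^2 := by
      have h' : sr * (kr * sr - vr)^2 ≤ sr * ((kr - lr) * (vr - sr)^2) := by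
        calc sr * (kr * sr - vr)^2 ≤ (kr - lr) * sr * (vr - sr)^2 := step1
          _ = sr * ((kr - lr) * (vr - sr)^2) := by ring
      exact le_of_mul_le_mul_left h' hsr0'
    have step3 : kr * sr - vr ≤ Real.sqrt (kr - lr) * (vr - sr) := by
      have h1 : kr * sr - vr ≤ |kr * sr - vr| := le_abs_self _
      have h2 : |kr * sr - vr| = Real.sqrt ((kr * sr - vr)^2) := (Real.sqrt_sq_eq_abs _).symm
      have h3 : Real.sqrt ((kr * sr - vr)^2) ≤ Real.sqrt ((kr - lr) * (vr - sr)^2) :=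
        Real.sqrt_le_sqrt step2
      have h4 : Real.sqrt ((kr - lr) * (vr - sr)^2) = Real.sqrt (kr - lr) * (vr - sr) := by
        rw [Real.sqrt_mul hmr0, Real.sqrt_sq (by linarith : (0:ℝ) ≤ vr - sr)]
      linarith [h1, h2, h3, h4]
    have hq0 : (0:ℝ) < kr + Real.sqrt (kr - lr) := by linarith
    rw [le_div_iff₀ hq0]
    linarith [step3]
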